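/- arXiv:1310.2848 — 3 statements merged into one kernel-verified Lean document; each statement's English description precedes it below -/
import Mathlib

section
/- Let T be an abelian group and let K_0 ≤ K ≤ T be subgroups with the index [K : K_0] finite, say equal to m. Then there exists a unitary representation ρ : T → U(m) such that: ρ(x) is the identity matrix for every x ∈ K_0; trace(ρ(x)) = 0 for every x ∈ K ∖ K_0; and ρ contains the trivial one-dimensional representation as a direct summand, i.e. there is a nonzero vector v ∈ ℂ^m with ρ(t)v = v for all t ∈ T. -/
open CategoryTheory

/-- The circle group is isomorphic to `Multiplicative Real.Angle`. -/
noncomputable def angleMulEquivCircle : Multiplicative Real.Angle ≃* Circle where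
  toFun θ := Real.Angle.toCircle θ.toAdd
  invFun z := .ofAdd (Complex.arg z : Real.Angle)
  left_inv θ := by simp
  right_inv z := Circle.exp_arg z
  map_mul' a b := Real.Angle.toCircle_add _ _

/-- Any character of a subgroup of an abelian group with values in the circle
extends to the whole group (the circle is divisible, hence injective). -/
lemma Circle.exists_monoidHom_extension {T : Type} [CommGroup T] (K : Subgroup T)
    (f : K →* Circle) : ∃ g : T →* Circle, ∀ k : K, g k = f k := by
  classical
  haveI : Fact (0 < 2 * Real.pi) := ⟨Real.two_pi_pos⟩
  haveI : DivisibleBy Real.Angle ℤ := (inferInstance : DivisibleBy (AddCircle (2 * Real.pi)) ℤ)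
  let e := angleMulEquivCircle
  let f' : Additive K →+ Real.Angle := MonoidHom.toAdditiveLeft (e.symm.toMonoidHom.comp f)
  let ι : Additive K →+ Additive T := MonoidHom.toAdditive K.subtype
  haveI : Injective (AddCommGrpCat.of Real.Angle) := AddCommGrpCat.injective_of_divisible _
  haveI : Mono (AddCommGrpCat.ofHom ι) := by
    rw [AddCommGrpCat.mono_iff_injective]
    exact fun a b h => Subtype.ext h
  let g' : AddCommGrpCat.of (Additive T) ⟶ AddCommGrpCat.of Real.Angle :=
    Injective.factorThru (AddCommGrpCat.ofHom f') (AddCommGrpCat.ofHom ι)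
  have hfac := Injective.comp_factorThru (AddCommGrpCat.ofHom f') (AddCommGrpCat.ofHom ι)
  let g'' : Additive T →+ Real.Angle := g'.hom
  refine ⟨e.toMonoidHom.comp (AddMonoidHom.toMultiplicativeRight g''), fun k => ?_⟩
  have h1 : g'' (ι (Additive.ofMul k)) = f' (Additive.ofMul k) :=
    DFunLike.congr_fun (congrArg AddCommGrpCat.Hom.hom hfac) (Additive.ofMul k)
  show e (Multiplicative.ofAdd (g'' (Additive.ofMul (k : T)))) = f k
  have h2 : ι (Additive.ofMul k) = Additive.ofMul (k : T) := rfl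
  rw [← h2, h1]
  show e (Multiplicative.ofAdd (Multiplicative.toAdd (e.symm (f k)))) = f k
  simp

/-- First orthogonality: the sum over all `ℂˣ`-valued characters of a finite abelian
group evaluated at a nontrivial element vanishes. -/
lemma sum_characters_eq_zero {Q : Type} [CommGroup Q] [Fintype Q]
    [Fintype (Q →* ℂˣ)] {q : Q} (hq : q ≠ 1) :
    ∑ χ : Q →* ℂˣ, ((χ q : ℂˣ) : ℂ) = 0 := by
  haveI : NeZero ((Monoid.exponent Q : ℂ)) := by
    refine ⟨Nat.cast_ne_zero.mpr ?_⟩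
    exact Monoid.exponent_ne_zero_of_finite
  obtain ⟨χ₀, hχ₀⟩ := CommGroup.exists_apply_ne_one_of_hasEnoughRootsOfUnity Q ℂ hq
  set S := ∑ χ : Q →* ℂˣ, ((χ q : ℂˣ) : ℂ) with hS
  have key : ((χ₀ q : ℂˣ) : ℂ) * S = S := by
    rw [hS, Finset.mul_sum]
    exact Fintype.sum_equiv (Equiv.mulLeft χ₀) _ _ (fun χ => by
      simp [MonoidHom.mul_apply, Units.val_mul])
  have hne : ((χ₀ q : ℂˣ) : ℂ) ≠ 1 := by
    intro h; exact hχ₀ (Units.ext h)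
  have h0 : (((χ₀ q : ℂˣ) : ℂ) - 1) * S = 0 := by rw [sub_mul, one_mul, key, sub_self]
  rcases mul_eq_zero.mp h0 with h | h
  · exact absurd (sub_eq_zero.mp h) hne
  · exact h
/-- **Extension of the regular character of `K/K₀` to `T`** (Lemma 3.6 of the paper).
If `T` is an abelian group and `K₀ ≤ K` are subgroups of `T` with `[K : K₀] = m` finite,
then there is a unitary representation `ρ : T → U(m)` which is trivial on `K₀`, whose
character vanishes on `K \ K₀`, and which contains the trivial one-dimensional
representation as a direct summand (i.e. has a nonzero `T`-fixed vector). -/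
theorem exists_representation_vanishing_off_identity_component
    (T : Type) [CommGroup T] (K0 K : Subgroup T) (hle : K0 ≤ K)
    (m : ℕ) (hm : K0.relIndex K = m) (hm0 : m ≠ 0) :
    ∃ ρ : T →* Matrix.unitaryGroup (Fin m) ℂ,
      (∀ x ∈ K0, ρ x = 1) ∧
      (∀ x ∈ K, x ∉ K0 → Matrix.trace (ρ x : Matrix (Fin m) (Fin m) ℂ) = 0) ∧
      (∃ v : Fin m → ℂ, v ≠ 0 ∧
        ∀ t : T, (ρ t : Matrix (Fin m) (Fin m) ℂ).mulVec v = v) := by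
  classical
  set Kb : Subgroup K := K0.subgroupOf K with hKb
  have hcardQ : Nat.card (K ⧸ Kb) = m := hm
  haveI : Finite (K ⧸ Kb) := Nat.finite_of_card_ne_zero (hcardQ ▸ hm0)
  haveI : Fintype (K ⧸ Kb) := Fintype.ofFinite _
  -- the dual group
  obtain ⟨dq⟩ := CommGroup.monoidHom_mulEquiv_of_hasEnoughRootsOfUnity (K ⧸ Kb) ℂ
  haveI : Fintype ((K ⧸ Kb) →* ℂˣ) := Fintype.ofEquiv _ dq.symm.toEquiv
  have hcardD : Fintype.card ((K ⧸ Kb) →* ℂˣ) = m := by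
    rw [Fintype.card_congr dq.toEquiv, ← Nat.card_eq_fintype_card, hcardQ]
  -- characters have values on the circle
  have hnorm : ∀ (χ : (K ⧸ Kb) →* ℂˣ) (q : K ⧸ Kb), ‖((χ q : ℂˣ) : ℂ)‖ = 1 := by
    intro χ q
    have h1 : (χ q) ^ Fintype.card (K ⧸ Kb) = 1 := by
      rw [← map_pow, pow_card_eq_one, map_one]
    have h2 : ((χ q : ℂˣ) : ℂ) ^ Fintype.card (K ⧸ Kb) = 1 := by
      rw [← Units.val_pow_eq_pow_val, h1, Units.val_one]
    exact Complex.norm_eq_one_of_pow_eq_one h2 Fintype.card_ne_zero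
  -- the circle-valued character of K associated to χ
  let toC : ((K ⧸ Kb) →* ℂˣ) → (K →* Circle) := fun χ =>
    { toFun := fun k => ⟨((χ (QuotientGroup.mk k) : ℂˣ) : ℂ),
        mem_sphere_zero_iff_norm.mpr (hnorm χ _)⟩
      map_one' := by
        ext
        simp only [QuotientGroup.mk_one, map_one, Units.val_one]
        rfl
      map_mul' := fun a b => by
        ext
        simp only [QuotientGroup.mk_mul, map_mul, Units.val_mul]
        rfl }
  -- extensions to T, with the trivial character extended trivially
  let G : ((K ⧸ Kb) →* ℂˣ) → (T →* Circle) := fun χ =>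
    if χ = 1 then 1 else Classical.choose (Circle.exists_monoidHom_extension K (toC χ))
  have hG : ∀ χ (k : K), G χ (k : T) = toC χ k := by
    intro χ k
    by_cases h : χ = 1
    · subst h
      simp only [G, if_pos rfl]
      ext
      simp only [MonoidHom.one_apply]
      show (1 : ℂ) = ((((1 : (K ⧸ Kb) →* ℂˣ) (QuotientGroup.mk k) : ℂˣ)) : ℂ)
      simp
    · simp only [G, if_neg h]
      exact Classical.choose_spec (Circle.exists_monoidHom_extension K (toC χ)) k
  have hG1 : G 1 = 1 := by simp only [G, if_pos rfl]
  -- index the characters by Fin m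
  let ι : Fin m ≃ ((K ⧸ Kb) →* ℂˣ) := (Fintype.equivFinOfCardEq hcardD).symm
  -- the diagonal entries
  let c : Fin m → T → ℂ := fun i t => ((G (ι i) t : ℂ))
  have hc_norm : ∀ i t, ‖c i t‖ = 1 := fun i t => mem_sphere_zero_iff_norm.mp (G (ι i) t).2
  have hmem : ∀ t, Matrix.diagonal (fun i => c i t) ∈ Matrix.unitaryGroup (Fin m) ℂ := by
    intro t
    rw [Matrix.mem_unitaryGroup_iff, Matrix.star_eq_conjTranspose,
      Matrix.diagonal_conjTranspose, Matrix.diagonal_mul_diagonal, ← Matrix.diagonal_one]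
    refine congrArg Matrix.diagonal (funext fun i => ?_)
    show c i t * (starRingEnd ℂ) (c i t) = 1
    rw [mul_comm, Complex.conj_mul', ← Complex.ofReal_pow, hc_norm, one_pow, Complex.ofReal_one]
  have hc_one : ∀ i, c i 1 = 1 := by
    intro i
    show ((G (ι i) 1 : ℂ)) = 1
    rw [map_one]; rfl
  have hc_mul : ∀ i t s, c i (t * s) = c i t * c i s := by
    intro i t s
    show ((G (ι i) (t * s) : ℂ)) = c i t * c i s
    rw [map_mul]; rfl
  let ρ : T →* Matrix.unitaryGroup (Fin m) ℂ :=
    { toFun := fun t => ⟨Matrix.diagonal (fun i => c i t), hmem t⟩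
      map_one' := Subtype.ext (by
        show Matrix.diagonal (fun i => c i 1) = (1 : Matrix (Fin m) (Fin m) ℂ)
        rw [show (fun i => c i 1) = fun _ : Fin m => (1 : ℂ) from funext hc_one,
          Matrix.diagonal_one])
      map_mul' := fun t s => Subtype.ext (by
        show Matrix.diagonal (fun i => c i (t * s))
          = Matrix.diagonal (fun i => c i t) * Matrix.diagonal (fun i => c i s)
        rw [Matrix.diagonal_mul_diagonal]
        exact congrArg Matrix.diagonal (funext fun i => hc_mul i t s)) }
  have hρ : ∀ t, (ρ t : Matrix (Fin m) (Fin m) ℂ) = Matrix.diagonal (fun i => c i t) :=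
    fun t => rfl
  have hcK : ∀ i (k : K), c i (k : T) = (((ι i) (QuotientGroup.mk k) : ℂˣ) : ℂ) := by
    intro i k
    show ((G (ι i) (k : T) : ℂ)) = _
    rw [hG (ι i) k]
    rfl
  refine ⟨ρ, ?_, ?_, ?_⟩
  · -- trivial on K0
    intro x hx
    have hxK : x ∈ K := hle hx
    have hq : (QuotientGroup.mk (⟨x, hxK⟩ : K) : K ⧸ Kb) = 1 :=
      (QuotientGroup.eq_one_iff _).mpr hx
    refine Subtype.ext ?_
    show Matrix.diagonal (fun i => c i x) = (1 : Matrix (Fin m) (Fin m) ℂ)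
    have : ∀ i, c i x = 1 := by
      intro i
      have := hcK i ⟨x, hxK⟩
      rw [hq, map_one, Units.val_one] at this
      exact this
    rw [show (fun i => c i x) = fun _ : Fin m => (1 : ℂ) from funext this,
      Matrix.diagonal_one]
  · -- trace vanishes on K \ K0
    intro x hxK hx0
    have hq : (QuotientGroup.mk (⟨x, hxK⟩ : K) : K ⧸ Kb) ≠ 1 := by
      rw [Ne, QuotientGroup.eq_one_iff]
      exact hx0
    rw [hρ, Matrix.trace_diagonal]
    have : ∀ i, c i x = (((ι i) (QuotientGroup.mk (⟨x, hxK⟩ : K)) : ℂˣ) : ℂ) :=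
      fun i => hcK i ⟨x, hxK⟩
    simp_rw [this]
    rw [Equiv.sum_comp ι (fun χ => ((χ (QuotientGroup.mk (⟨x, hxK⟩ : K)) : ℂˣ) : ℂ))]
    exact sum_characters_eq_zero hq
  · -- fixed vector
    refine ⟨fun i => if ι i = 1 then 1 else 0, ?_, ?_⟩
    · intro h
      have := congrFun h (ι.symm 1)
      simp at this
    · intro t
      funext i
      rw [hρ, Matrix.mulVec_diagonal]
      by_cases h : ι i = 1
      · rw [if_pos h, mul_one]
        show ((G (ι i) t : ℂ)) = 1
        rw [h, hG1]
        rfl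
      · rw [if_neg h, mul_zero]
end

section
/- Let T be a group, W a finite subgroup of the automorphism group Aut(T), ρ : T → U(m) a unitary representation, and X ⊆ T a subset such that trace(ρ(x)) = 0 for every x ∈ X. Then there exists a unitary representation φ of T of dimension m^{|W|} such that trace(φ(w(t))) = trace(φ(t)) for every t ∈ T and every w ∈ W, and trace(φ(y)) = 0 for every y ∈ w(X) and every w ∈ W. Moreover, if ρ has a nonzero vector fixed by all of T, then φ can be chosen to have a nonzero vector fixed by all of T. -/
open Matrix Finset

namespace AvgRepAux

variable {W : Type} [Fintype W] {m : ℕ}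

/-- Tensor (Kronecker) product of a family of `m × m` matrices indexed by `W`. -/
def tens (A : W → Matrix (Fin m) (Fin m) ℂ) : Matrix (W → Fin m) (W → Fin m) ℂ :=
  Matrix.of fun a b => ∏ w, A w (a w) (b w)

lemma tens_apply (A : W → Matrix (Fin m) (Fin m) ℂ) (a b : W → Fin m) :
    tens A a b = ∏ w, A w (a w) (b w) := rfl

lemma tens_mul [DecidableEq W] (A B : W → Matrix (Fin m) (Fin m) ℂ) :
    tens A * tens B = tens (fun w => A w * B w) := by
  ext a b
  simp only [tens_apply, Matrix.mul_apply]
  rw [Fintype.prod_sum (fun w j => A w (a w) j * B w j (b w))]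
  congr 1
  ext c
  rw [Finset.prod_mul_distrib]

lemma tens_one [DecidableEq W] :
    tens (fun _ : W => (1 : Matrix (Fin m) (Fin m) ℂ)) = 1 := by
  ext a b
  by_cases h : a = b
  · subst h; simp [tens_apply, Matrix.one_apply]
  · obtain ⟨w, hw⟩ := Function.ne_iff.mp h
    rw [tens_apply, Matrix.one_apply_ne h]
    exact Finset.prod_eq_zero (Finset.mem_univ w) (Matrix.one_apply_ne hw)
    

lemma star_tens (A : W → Matrix (Fin m) (Fin m) ℂ) :
    star (tens A) = tens (fun w => star (A w)) := by
  ext a b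
  simp only [Matrix.star_apply, tens_apply, star_prod]

lemma trace_tens [DecidableEq W] (A : W → Matrix (Fin m) (Fin m) ℂ) :
    (tens A).trace = ∏ w, (A w).trace := by
  classical
  simp only [Matrix.trace, Matrix.diag, tens_apply]
  rw [Fintype.prod_sum (fun w j => A w j j)]

lemma tens_mulVec [DecidableEq W] (A : W → Matrix (Fin m) (Fin m) ℂ) (v : Fin m → ℂ) :
    (tens A).mulVec (fun a => ∏ w, v (a w)) = fun a => ∏ w, (A w).mulVec v (a w) := by
  classical
  ext a
  simp only [Matrix.mulVec, dotProduct, tens_apply]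
  rw [Fintype.prod_sum (fun w j => A w (a w) j * v j)]
  congr 1
  ext c
  rw [Finset.prod_mul_distrib]

end AvgRepAux

/-- **Averaging a representation over a finite group of automorphisms**
(the key step in the proof of the paper's main Theorem 3.?).
Given a group `T`, a finite subgroup `W ≤ Aut T`, a unitary representation
`ρ : T → U(m)` and a subset `X ⊆ T` on which the character of `ρ` vanishes, there is a
unitary representation `φ` of `T` of dimension `m ^ |W|` whose character is
`W`-invariant and vanishes on `w(X)` for every `w ∈ W`; moreover, if `ρ` has a nonzero
`T`-fixed vector then `φ` can be chosen to have a nonzero `T`-fixed vector. -/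
theorem averaged_representation_over_automorphisms
    (T : Type) [Group T] (W : Subgroup (MulAut T)) (hWfin : Finite W)
    (m : ℕ) (ρ : T →* Matrix.unitaryGroup (Fin m) ℂ) (X : Set T)
    (hX : ∀ x ∈ X, Matrix.trace (ρ x : Matrix (Fin m) (Fin m) ℂ) = 0) :
    (∃ φ : T →* Matrix.unitaryGroup (Fin (m ^ Nat.card W)) ℂ,
      (∀ w ∈ W, ∀ t : T,
        Matrix.trace (φ (w t) : Matrix (Fin (m ^ Nat.card W)) (Fin (m ^ Nat.card W)) ℂ) =
          Matrix.trace (φ t : Matrix (Fin (m ^ Nat.card W)) (Fin (m ^ Nat.card W)) ℂ)) ∧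
      (∀ w ∈ W, ∀ x ∈ X,
        Matrix.trace (φ (w x) : Matrix (Fin (m ^ Nat.card W)) (Fin (m ^ Nat.card W)) ℂ) = 0)) ∧
    ((∃ v : Fin m → ℂ, v ≠ 0 ∧ ∀ t : T, (ρ t : Matrix (Fin m) (Fin m) ℂ).mulVec v = v) →
      ∃ φ : T →* Matrix.unitaryGroup (Fin (m ^ Nat.card W)) ℂ,
        (∀ w ∈ W, ∀ t : T,
          Matrix.trace (φ (w t) : Matrix (Fin (m ^ Nat.card W)) (Fin (m ^ Nat.card W)) ℂ) =
            Matrix.trace (φ t : Matrix (Fin (m ^ Nat.card W)) (Fin (m ^ Nat.card W)) ℂ)) ∧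
        (∀ w ∈ W, ∀ x ∈ X,
          Matrix.trace (φ (w x) : Matrix (Fin (m ^ Nat.card W)) (Fin (m ^ Nat.card W)) ℂ) = 0) ∧
        (∃ u : Fin (m ^ Nat.card W) → ℂ, u ≠ 0 ∧
          ∀ t : T, (φ t : Matrix (Fin (m ^ Nat.card W)) (Fin (m ^ Nat.card W)) ℂ).mulVec u = u)) := by
  classical
  haveI : Fintype W := Fintype.ofFinite W
  open AvgRepAux in
  -- the reindexing equivalence
  obtain ⟨e⟩ : Nonempty ((W → Fin m) ≃ Fin (m ^ Nat.card W)) := by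
    refine ⟨Fintype.equivFinOfCardEq ?_⟩
    simp [Nat.card_eq_fintype_card]
  -- the family of matrices
  set A : T → (W → Matrix (Fin m) (Fin m) ℂ) :=
    fun t w => (ρ ((w : MulAut T) t) : Matrix (Fin m) (Fin m) ℂ) with hA
  have hAmul : ∀ s t : T, (fun w => A s w * A t w) = A (s * t) := by
    intro s t; funext w; simp [hA, _root_.map_mul]
  -- the averaged representation
  have hmem : ∀ t : T,
      (AvgRepAux.tens (A t)).submatrix e.symm e.symm ∈
        Matrix.unitaryGroup (Fin (m ^ Nat.card W)) ℂ := by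
    intro t
    rw [Matrix.mem_unitaryGroup_iff']
    have : star ((AvgRepAux.tens (A t)).submatrix e.symm e.symm)
        = (star (AvgRepAux.tens (A t))).submatrix e.symm e.symm := by
      simp [Matrix.star_eq_conjTranspose, Matrix.conjTranspose_submatrix]
    rw [this, Matrix.submatrix_mul_equiv, AvgRepAux.star_tens, AvgRepAux.tens_mul]
    have : (fun w => star (A t w) * A t w) = fun _ : W => (1 : Matrix (Fin m) (Fin m) ℂ) := by
      funext w
      exact (ρ ((w : MulAut T) t)).prop.1
    rw [this, AvgRepAux.tens_one, Matrix.submatrix_one_equiv]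
  let φ : T →* Matrix.unitaryGroup (Fin (m ^ Nat.card W)) ℂ :=
    { toFun := fun t => ⟨(AvgRepAux.tens (A t)).submatrix e.symm e.symm, hmem t⟩
      map_one' := Subtype.ext (by
        have h1 : A 1 = fun _ : W => (1 : Matrix (Fin m) (Fin m) ℂ) := by
          funext w; simp [hA]
        show (AvgRepAux.tens (A 1)).submatrix e.symm e.symm = _
        rw [h1, AvgRepAux.tens_one, Matrix.submatrix_one_equiv]
        rfl)
      map_mul' := fun s t => Subtype.ext (by
        show (AvgRepAux.tens (A (s * t))).submatrix e.symm e.symm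
          = (AvgRepAux.tens (A s)).submatrix e.symm e.symm
            * (AvgRepAux.tens (A t)).submatrix e.symm e.symm
        rw [Matrix.submatrix_mul_equiv, AvgRepAux.tens_mul, hAmul]) }
  -- trace of φ
  have htr : ∀ t : T,
      Matrix.trace (φ t : Matrix (Fin (m ^ Nat.card W)) (Fin (m ^ Nat.card W)) ℂ)
        = ∏ w : W, Matrix.trace (ρ ((w : MulAut T) t) : Matrix (Fin m) (Fin m) ℂ) := by
    intro t
    show Matrix.trace ((AvgRepAux.tens (A t)).submatrix e.symm e.symm) = _
    have : Matrix.trace ((AvgRepAux.tens (A t)).submatrix e.symm e.symm)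
        = Matrix.trace (AvgRepAux.tens (A t)) := by
      simp only [Matrix.trace, Matrix.diag, Matrix.submatrix_apply]
      exact Equiv.sum_comp e.symm (fun p => AvgRepAux.tens (A t) p p)
    rw [this, AvgRepAux.trace_tens]
  -- W-invariance of the character
  have hinv : ∀ w ∈ W, ∀ t : T,
      Matrix.trace (φ (w t) : Matrix (Fin (m ^ Nat.card W)) (Fin (m ^ Nat.card W)) ℂ)
        = Matrix.trace (φ t : Matrix (Fin (m ^ Nat.card W)) (Fin (m ^ Nat.card W)) ℂ) := by
    intro w hw t
    rw [htr, htr]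
    refine Fintype.prod_equiv (Equiv.mulRight (⟨w, hw⟩ : W)) _ _ ?_
    intro u
    congr 1
  -- vanishing on w(X)
  have hvan : ∀ w ∈ W, ∀ x ∈ X,
      Matrix.trace (φ (w x) : Matrix (Fin (m ^ Nat.card W)) (Fin (m ^ Nat.card W)) ℂ) = 0 := by
    intro w hw x hx
    rw [htr]
    refine Finset.prod_eq_zero (Finset.mem_univ ((⟨w, hw⟩ : W)⁻¹)) ?_
    have : (((⟨w, hw⟩ : W)⁻¹ : W) : MulAut T) (w x) = x := by
      show ((⟨w, hw⟩ : W)⁻¹ : MulAut T) (((⟨w, hw⟩ : W) : MulAut T) x) = x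
      rw [← MulAut.mul_apply]
      norm_cast
      rw [inv_mul_cancel]
      rfl
    rw [this]
    exact hX x hx
  refine ⟨⟨φ, hinv, hvan⟩, ?_⟩
  rintro ⟨v, hv0, hvfix⟩
  refine ⟨φ, hinv, hvan, ?_⟩
  refine ⟨fun i => ∏ w : W, v (e.symm i w), ?_, ?_⟩
  · obtain ⟨j, hj⟩ := Function.ne_iff.mp hv0
    intro h
    have := congrFun h (e (fun _ => j))
    simp only [Equiv.symm_apply_apply, Pi.zero_apply, Finset.prod_const] at this
    exact hj (pow_eq_zero_iff Fintype.card_ne_zero |>.mp this)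
  · intro t
    show ((AvgRepAux.tens (A t)).submatrix e.symm e.symm).mulVec _ = _
    rw [Matrix.submatrix_mulVec_equiv]
    have hcomp : ((fun i => ∏ w : W, v (e.symm i w)) ∘ e.symm.symm)
        = fun a : W → Fin m => ∏ w : W, v (a w) := by
      funext a; simp
    rw [hcomp, AvgRepAux.tens_mulVec]
    funext i
    simp only [Function.comp_apply]
    congr 1
    funext w
    rw [hvfix]
end

section
/- Let p be a prime and let S be a group having a normal subgroup T of finite index such that T is isomorphic to a finite direct sum of copies of the Prüfer p-group. Then S admits a faithful finite-dimensional unitary representation, i.e. an injective group homomorphism S → U(N) for some N ≥ 1. In particular, every discrete p-toral group admits a faithful finite-dimensional unitary representation. -/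
/-- `ℚ/ℤ`. -/
abbrev QModZ : Type := ℚ ⧸ AddSubgroup.zmultiples (1 : ℚ)

/-- The Prüfer `p`-group `ℤ/p^∞`: the `p`-primary torsion subgroup of `ℚ/ℤ`. -/
abbrev PruferGroup (p : ℕ) [Fact p.Prime] : AddSubgroup QModZ :=
  AddCommGroup.primaryComponent QModZ p

/-- The additive hom `ℚ → ℝ/ℤ`. -/
noncomputable def ratToAddCircle : ℚ →+ AddCircle (1 : ℝ) :=
  (QuotientAddGroup.mk' (AddSubgroup.zmultiples (1 : ℝ))).comp (Rat.castHom ℝ).toAddMonoidHom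

lemma ratToAddCircle_apply (q : ℚ) :
    ratToAddCircle q = ((q : ℝ) : AddCircle (1 : ℝ)) := rfl

/-- The induced additive hom `ℚ/ℤ → ℝ/ℤ`. -/
noncomputable def qmodzToAddCircle : QModZ →+ AddCircle (1 : ℝ) :=
  QuotientAddGroup.lift _ ratToAddCircle (by
    intro q hq
    obtain ⟨k, hk⟩ := AddSubgroup.mem_zmultiples_iff.mp hq
    rw [AddMonoidHom.mem_ker, ratToAddCircle_apply, QuotientAddGroup.eq_zero_iff,
      AddSubgroup.mem_zmultiples_iff]
    refine ⟨k, ?_⟩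
    rw [← hk]
    push_cast [zsmul_eq_mul]
    ring)

lemma qmodzToAddCircle_injective : Function.Injective qmodzToAddCircle := by
  rw [injective_iff_map_eq_zero]
  intro x hx
  induction x using QuotientAddGroup.induction_on with
  | H q =>
    have hx2 : ratToAddCircle q = 0 := hx
    rw [ratToAddCircle_apply, QuotientAddGroup.eq_zero_iff,
      AddSubgroup.mem_zmultiples_iff] at hx2
    obtain ⟨k, hk⟩ := hx2
    rw [QuotientAddGroup.eq_zero_iff, AddSubgroup.mem_zmultiples_iff]
    refine ⟨k, ?_⟩
    have h1 : ((k • (1 : ℚ) : ℚ) : ℝ) = ((q : ℚ) : ℝ) := by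
      rw [← hk]
      push_cast [zsmul_eq_mul]
      ring
    exact_mod_cast h1

/-- The embedding `ℚ/ℤ → Circle`. -/
noncomputable def qmodzToCircle (x : QModZ) : Circle :=
  AddCircle.toCircle (qmodzToAddCircle x)

lemma qmodzToCircle_add (x y : QModZ) :
    qmodzToCircle (x + y) = qmodzToCircle x * qmodzToCircle y := by
  unfold qmodzToCircle
  rw [map_add, AddCircle.toCircle_add]

lemma qmodzToCircle_zero : qmodzToCircle 0 = 1 := by
  unfold qmodzToCircle
  rw [map_zero, AddCircle.toCircle_zero]

lemma qmodzToCircle_eq_one {x : QModZ} (h : qmodzToCircle x = 1) : x = 0 := by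
  have h2 : AddCircle.toCircle (qmodzToAddCircle x)
      = AddCircle.toCircle (0 : AddCircle (1 : ℝ)) := by
    rw [AddCircle.toCircle_zero]; exact h
  have h3 : qmodzToAddCircle x = 0 := AddCircle.injective_toCircle one_ne_zero h2
  exact qmodzToAddCircle_injective (by rw [h3, map_zero])

open Matrix in
/-- A group with a "monomial matrix" datum (a permutation action on a finite index
set together with a compatible circle-valued cocycle) which is jointly faithful
admits a faithful finite-dimensional unitary representation. -/
theorem monomial_rep (G : Type*) [Group G] (Q A : Type) [Fintype Q] [Fintype A]
    [DecidableEq Q] [DecidableEq A] [Nonempty Q] [Nonempty A]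
    (f : G → Q → Q) (c : G → Q → A → Circle)
    (hf1 : ∀ q, f 1 q = q)
    (hfm : ∀ g h q, f (g * h) q = f g (f h q))
    (hc1 : ∀ q a, c 1 q a = 1)
    (hcm : ∀ g h q a, c (g * h) q a = c g (f h q) a * c h q a)
    (hinj : ∀ g, (∀ q, f g q = q) → (∀ q a, c g q a = 1) → g = 1) :
    ∃ N : ℕ, 1 ≤ N ∧
      ∃ σ : G →* Matrix.unitaryGroup (Fin N) ℂ, Function.Injective σ := by
  classical
  -- the monomial matrices
  set m : G → Matrix (Q × A) (Q × A) ℂ := fun g x y =>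
    if x.1 = f g y.1 ∧ x.2 = y.2 then (c g y.1 x.2 : ℂ) else 0 with hm
  have m_apply : ∀ g (x y : Q × A),
      m g x y = if x.1 = f g y.1 ∧ x.2 = y.2 then (c g y.1 x.2 : ℂ) else 0 := by
    intro g x y; rw [hm]
  have m_one : m 1 = 1 := by
    ext x y
    by_cases h : x = y
    · subst h
      simp [hm, hf1, hc1, Matrix.one_apply]
    · have : ¬(x.1 = f 1 y.1 ∧ x.2 = y.2) := by
        rw [hf1]
        intro ⟨h1, h2⟩
        exact h (Prod.ext h1 h2)
      simp [hm, this, Matrix.one_apply, h]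
  have m_mul : ∀ g h, m (g * h) = m g * m h := by
    intro g h
    ext x y
    rw [Matrix.mul_apply]
    rw [Finset.sum_eq_single (f h y.1, y.2)]
    · by_cases hx : x.1 = f g (f h y.1) ∧ x.2 = y.2
      · have hx' : x.1 = f (g * h) y.1 ∧ x.2 = y.2 := by rw [hfm]; exact hx
        simp only [hm, if_pos hx, if_pos hx', if_pos (⟨rfl, rfl⟩ : (f h y.1, y.2).1 = f h y.1 ∧ (f h y.1, y.2).2 = y.2)]
        rw [hcm g h y.1 x.2, hx.2]
        push_cast
        ring
      · have hx' : ¬(x.1 = f (g * h) y.1 ∧ x.2 = y.2) := by rw [hfm]; exact hx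
        simp only [hm, if_neg hx, if_neg hx']
        simp
    · intro z _ hz
      have : ¬(z.1 = f h y.1 ∧ z.2 = y.2) := by
        intro ⟨h1, h2⟩
        exact hz (Prod.ext h1 h2)
      simp [hm, this]
    · intro h'
      exact absurd (Finset.mem_univ _) h'
  have key : ∀ g q, f g⁻¹ (f g q) = q := by
    intro g q
    rw [← hfm, inv_mul_cancel, hf1]
  have key2 : ∀ g q, f g (f g⁻¹ q) = q := by
    intro g q
    rw [← hfm, mul_inv_cancel, hf1]
  have c_inv : ∀ g q a, c g⁻¹ (f g q) a = (c g q a)⁻¹ := by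
    intro g q a
    have := hcm g⁻¹ g q a
    rw [inv_mul_cancel, hc1] at this
    rw [eq_inv_iff_mul_eq_one]
    exact this.symm
  have m_star : ∀ g, star (m g) = m g⁻¹ := by
    intro g
    ext x y
    rw [Matrix.star_apply]
    by_cases h : x.1 = f g⁻¹ y.1 ∧ x.2 = y.2
    · have h' : y.1 = f g x.1 ∧ y.2 = x.2 := by
        constructor
        · rw [h.1, key2]
        · exact h.2.symm
      simp only [hm, if_pos h, if_pos h']
      have : c g⁻¹ y.1 x.2 = (c g x.1 y.2)⁻¹ := by
        rw [h.2]
        conv_lhs => rw [← key2 g y.1, ← h.1]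
        rw [c_inv g x.1 y.2]
      rw [this, Circle.coe_inv_eq_conj]
      rfl
    · have h' : ¬(y.1 = f g x.1 ∧ y.2 = x.2) := by
        intro ⟨h1, h2⟩
        exact h ⟨by rw [h1, key], h2.symm⟩
      simp [hm, if_neg h, if_neg h']
  have m_unitary : ∀ g, m g ∈ Matrix.unitaryGroup (Q × A) ℂ := by
    intro g
    rw [Matrix.mem_unitaryGroup_iff]
    rw [m_star, ← m_mul, mul_inv_cancel, m_one]
  -- transport to `Fin N`
  set N := Fintype.card (Q × A) with hN
  have hN1 : 1 ≤ N := Fintype.card_pos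
  set eQ : Q × A ≃ Fin N := Fintype.equivFin _ with heQ
  set M : G → Matrix (Fin N) (Fin N) ℂ := fun g => (m g).submatrix eQ.symm eQ.symm with hM
  have M_one : M 1 = 1 := by rw [hM]; simp only [m_one]; exact Matrix.submatrix_one_equiv eQ.symm
  have M_mul : ∀ g h, M (g * h) = M g * M h := by
    intro g h
    rw [hM]
    simp only
    rw [m_mul, ← Matrix.submatrix_mul_equiv (m g) (m h) _ eQ.symm _]
  have M_unitary : ∀ g, M g ∈ Matrix.unitaryGroup (Fin N) ℂ := by
    intro g
    rw [Matrix.mem_unitaryGroup_iff, hM]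
    simp only
    rw [Matrix.star_eq_conjTranspose, Matrix.conjTranspose_submatrix,
      ← Matrix.star_eq_conjTranspose, m_star,
      Matrix.submatrix_mul_equiv (m g) (m g⁻¹) _ eQ.symm _,
      ← m_mul, mul_inv_cancel, m_one]
    exact Matrix.submatrix_one_equiv eQ.symm
  refine ⟨N, hN1, ⟨{ toFun := fun g => ⟨M g, M_unitary g⟩
                     map_one' := Subtype.ext M_one
                     map_mul' := fun g h => Subtype.ext (M_mul g h) }, ?_⟩⟩
  rw [injective_iff_map_eq_one]
  intro g hg
  have hMg : M g = 1 := by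
    have := congrArg (Subtype.val) hg
    simpa using this
  have hmg : m g = 1 := by
    ext x y
    have := congrFun (congrFun hMg (eQ x)) (eQ y)
    simp only [hM, Matrix.submatrix_apply, Equiv.symm_apply_apply] at this
    rw [this, Matrix.one_apply, Matrix.one_apply]
    simp [Equiv.apply_eq_iff_eq]
  have hfg : ∀ q, f g q = q := by
    intro q
    obtain ⟨a⟩ := ‹Nonempty A›
    by_contra hne
    have hcond : ((f g q, a) : Q × A) ≠ (q, a) := by
      intro h
      exact hne (congrArg Prod.fst h)
    have h1 := congrFun (congrFun hmg (f g q, a)) (q, a)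
    rw [m_apply, if_pos ⟨rfl, rfl⟩, Matrix.one_apply_ne hcond] at h1
    exact Circle.coe_ne_zero _ h1
  have hcg : ∀ q a, c g q a = 1 := by
    intro q a
    have h1 := congrFun (congrFun hmg (q, a)) (q, a)
    rw [m_apply, if_pos ⟨(hfg q).symm, rfl⟩, Matrix.one_apply_eq] at h1
    exact Circle.coe_injective (by rw [h1, Circle.coe_one])
  exact hinj g hfg hcg

/-- **Discrete `p`-toral groups have faithful unitary representations.**
If `S` is a group with a normal subgroup `T` of finite index isomorphic to a finite
direct sum of copies of the Prüfer `p`-group, then `S` admits a faithful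
finite-dimensional unitary representation `S → U(N)` for some `N ≥ 1`. -/
theorem discrete_p_toral_faithful_unitary
    (p : ℕ) [Fact p.Prime] (S : Type) [Group S]
    (T : Subgroup S) (hN : T.Normal) (hfin : T.index ≠ 0)
    (r : ℕ) (e : T ≃* Multiplicative (Fin r → PruferGroup p)) :
    ∃ N : ℕ, 1 ≤ N ∧
      ∃ σ : S →* Matrix.unitaryGroup (Fin N) ℂ, Function.Injective σ := by
  classical
  haveI := hN
  haveI hfinite : Finite (S ⧸ T) := by
    rw [Subgroup.index] at hfin
    exact (Nat.card_ne_zero.mp hfin).2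
  haveI : Fintype (S ⧸ T) := Fintype.ofFinite _
  -- a section of the quotient map, sending `1` to `1`
  set ρ : S ⧸ T → S := fun q => if q = 1 then 1 else Quotient.out q with hρdef
  have hρ : ∀ q : S ⧸ T, (QuotientGroup.mk (ρ q) : S ⧸ T) = q := by
    intro q
    by_cases h : q = 1
    · simp [hρdef, h]
    · simp only [hρdef, if_neg h]
      exact Quotient.out_eq q
  have hρ1 : ρ 1 = 1 := by simp [hρdef]
  -- the permutation part
  set f : S → (S ⧸ T) → (S ⧸ T) := fun s q => (QuotientGroup.mk s) * q with hfdef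
  have hf1 : ∀ q, f 1 q = q := by intro q; simp [hfdef]
  have hfm : ∀ s₁ s₂ q, f (s₁ * s₂) q = f s₁ (f s₂ q) := by
    intro s₁ s₂ q
    simp [hfdef, mul_assoc]
  -- the cocycle with values in `T`
  have tmem : ∀ (s : S) (q : S ⧸ T), (ρ (f s q))⁻¹ * s * ρ q ∈ T := by
    intro s q
    rw [← QuotientGroup.eq_one_iff]
    have : (QuotientGroup.mk ((ρ (f s q))⁻¹ * s * ρ q) : S ⧸ T)
        = (QuotientGroup.mk (ρ (f s q)))⁻¹ * (QuotientGroup.mk s) * (QuotientGroup.mk (ρ q)) := by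
      simp
    rw [this, hρ, hρ]
    simp only [hfdef]
    group
  set t : S → (S ⧸ T) → T := fun s q => ⟨(ρ (f s q))⁻¹ * s * ρ q, tmem s q⟩ with htdef
  have t_one : ∀ q, t 1 q = 1 := by
    intro q
    ext
    simp only [htdef]
    rw [hf1]
    simp
  have t_cocycle : ∀ s₁ s₂ q, t (s₁ * s₂) q = t s₁ (f s₂ q) * t s₂ q := by
    intro s₁ s₂ q
    ext
    simp only [htdef, Subgroup.coe_mul]
    rw [hfm]
    group
  have t_diag : ∀ s (hs : s ∈ T), f s 1 = 1 → t s 1 = ⟨s, hs⟩ := by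
    intro s hs hfs1
    ext
    simp only [htdef]
    rw [hfs1, hρ1]
    group
  -- the circle-valued cocycle
  set c : S → (S ⧸ T) → Option (Fin r) → Circle := fun s q a =>
    Option.rec 1 (fun i => qmodzToCircle (((Multiplicative.toAdd (e (t s q))) i : PruferGroup p) : QModZ)) a
    with hcdef
  have hc1 : ∀ q a, c 1 q a = 1 := by
    intro q a
    cases a with
    | none => rfl
    | some i =>
      simp only [hcdef, t_one, map_one]
      have : (Multiplicative.toAdd (1 : Multiplicative (Fin r → PruferGroup p))) i = 0 := rfl
      rw [this]
      simpa using qmodzToCircle_zero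
  have hcm : ∀ s₁ s₂ q a, c (s₁ * s₂) q a = c s₁ (f s₂ q) a * c s₂ q a := by
    intro s₁ s₂ q a
    cases a with
    | none => simp [hcdef]
    | some i =>
      simp only [hcdef, t_cocycle, map_mul]
      rw [← qmodzToCircle_add]
      congr 1

  have hinj : ∀ s, (∀ q, f s q = q) → (∀ q a, c s q a = 1) → s = 1 := by
    intro s hfs hcs
    have hsT : s ∈ T := by
      have := hfs 1
      simp only [hfdef, mul_one] at this
      exact (QuotientGroup.eq_one_iff s).mp this
    have hts : t s 1 = ⟨s, hsT⟩ := t_diag s hsT (hfs 1)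
    have : e ⟨s, hsT⟩ = 1 := by
      have h0 : Multiplicative.toAdd (e ⟨s, hsT⟩) = 0 := by
        funext i
        have := hcs 1 (some i)
        simp only [hcdef, hts] at this
        have h1 := qmodzToCircle_eq_one this
        have h2 : ((Multiplicative.toAdd (e ⟨s, hsT⟩)) i : PruferGroup p) = 0 :=
          Subtype.ext (by exact_mod_cast h1)
        exact h2
      have : e ⟨s, hsT⟩ = Multiplicative.ofAdd 0 := by
        rw [← h0]
        rfl
      simpa using this
    have h4 : (⟨s, hsT⟩ : T) = 1 := e.injective (by rw [this, map_one])
    simpa using congrArg Subtype.val h4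
  exact monomial_rep S (S ⧸ T) (Option (Fin r)) f c hf1 hfm hc1 hcm hinj
end
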